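/- Every (0,1,−1) matrix E of rank 1 with zero row sums and zero column sums is realizable: there exists a (0,1) matrix A such that A+E is a (0,1) matrix and A, A+E are Gram mates. Moreover, for any such pair, (2A+E)Eᵀ = 0. -/

import Mathlib

open Matrix

theorem stmt13 (m n : ℕ) (E : Matrix (Fin m) (Fin n) ℝ)
    (hE : ∀ i j, E i j = 0 ∨ E i j = 1 ∨ E i j = -1)
    (hrank : E.rank = 1)
    (hrow : E *ᵥ (fun _ => 1) = 0)
    (hcol : (fun _ => 1) ᵥ* E = 0) :
    (∃ A : Matrix (Fin m) (Fin n) ℝ, (∀ i j, A i j = 0 ∨ A i j = 1) ∧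
      (∀ i j, (A + E) i j = 0 ∨ (A + E) i j = 1) ∧
      A * Aᵀ = (A + E) * (A + E)ᵀ ∧ Aᵀ * A = (A + E)ᵀ * (A + E)) ∧
    (∀ A : Matrix (Fin m) (Fin n) ℝ, (∀ i j, A i j = 0 ∨ A i j = 1) →
      (∀ i j, (A + E) i j = 0 ∨ (A + E) i j = 1) →
      A * Aᵀ = (A + E) * (A + E)ᵀ → Aᵀ * A = (A + E)ᵀ * (A + E) →
      ((2 : ℝ) • A + E) * Eᵀ = 0) := by
  -- E is nonzero
  have hE0 : E ≠ 0 := by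
    intro h
    rw [h, Matrix.rank_zero] at hrank
    exact one_ne_zero hrank.symm
  have hex : ∃ i j, E i j ≠ 0 := by
    by_contra h
    push_neg at h
    exact hE0 (by ext i j; simpa using h i j)
  obtain ⟨i0, j0, hne⟩ := hex
  -- rank-one factorization via column space
  have hfin : Module.finrank ℝ (LinearMap.range E.mulVecLin) = 1 := hrank
  obtain ⟨v, hv⟩ := finrank_le_one_iff.mp (le_of_eq hfin)
  have hcolmem : ∀ j : Fin n, ∃ c : ℝ, ∀ i, E i j = c * (v : Fin m → ℝ) i := by
    intro j
    have hmem : (fun i => E i j) ∈ LinearMap.range E.mulVecLin := by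
      refine ⟨Pi.single j 1, ?_⟩
      ext i
      simp [Matrix.mulVecLin_apply, Matrix.mulVec_single]
    obtain ⟨c, hc⟩ := hv ⟨_, hmem⟩
    refine ⟨c, fun i => ?_⟩
    have := congrFun (congrArg (Subtype.val) hc) i
    simpa using this.symm
  choose y hy using hcolmem
  -- outer product structure: E i j * E i' j' = E i j' * E i' j
  have hminor : ∀ i i' j j', E i j * E i' j' = E i j' * E i' j := by
    intro i i' j j'
    rw [hy j i, hy j' i', hy j' i, hy j i']
    ring
  set e : ℝ := E i0 j0 with he_def
  have he2 : e * e = 1 := by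
    rcases hE i0 j0 with h | h | h
    · exact absurd h hne
    · rw [he_def, h]; norm_num
    · rw [he_def, h]; norm_num
  set u : Fin m → ℝ := fun i => E i j0 with hu_def
  set w : Fin n → ℝ := fun j => E i0 j * e with hw_def
  have hfac : ∀ i j, E i j = u i * w j := by
    intro i j
    have hm := hminor i i0 j j0
    calc E i j = E i j * (e * e) := by rw [he2, mul_one]
      _ = (E i j * E i0 j0) * e := by rw [he_def]; ring
      _ = (E i j0 * E i0 j) * e := by rw [hm]
      _ = u i * w j := by simp only [hu_def, hw_def]; ring
  have hu01 : ∀ i, u i = 0 ∨ u i = 1 ∨ u i = -1 := fun i => hE i j0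
  have hw01 : ∀ j, w j = 0 ∨ w j = 1 ∨ w j = -1 := by
    intro j
    rcases hE i0 j with h | h | h <;> rcases hE i0 j0 with h' | h' | h' <;>
      simp [hw_def, he_def, h, h']
  have hu3 : ∀ i, u i ^ 3 = u i := by
    intro i; rcases hu01 i with h | h | h <;> rw [h] <;> norm_num
  have hw3 : ∀ j, w j ^ 3 = w j := by
    intro j; rcases hw01 j with h | h | h <;> rw [h] <;> norm_num
  -- sum conditions
  have hsw : ∑ j, w j = 0 := by
    have := congrFun hrow i0
    simp only [Matrix.mulVec, dotProduct, mul_one, Pi.zero_apply] at this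
    calc ∑ j, w j = (∑ j, E i0 j) * e := by rw [Finset.sum_mul]
      _ = 0 := by rw [this, zero_mul]
  have hsu : ∑ i, u i = 0 := by
    have := congrFun hcol j0
    simp only [Matrix.vecMul, dotProduct, one_mul, Pi.zero_apply] at this
    exact this
  have hsw3 : ∑ j, w j ^ 3 = 0 := by
    rw [Finset.sum_congr rfl fun j _ => hw3 j]; exact hsw
  have hsu3 : ∑ i, u i ^ 3 = 0 := by
    rw [Finset.sum_congr rfl fun i _ => hu3 i]; exact hsu
  constructor
  · -- existence part
    refine ⟨Matrix.of fun i j => (E i j ^ 2 - E i j) / 2, ?_, ?_, ?_, ?_⟩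
    · intro i j
      rcases hE i j with h | h | h <;> simp only [Matrix.of_apply, h] <;> norm_num
    · intro i j
      rcases hE i j with h | h | h <;> simp only [Matrix.add_apply, Matrix.of_apply, h] <;> norm_num
    · ext i k
      simp only [Matrix.mul_apply, Matrix.add_apply, Matrix.transpose_apply, Matrix.of_apply]
      have key : ∀ j, ((E i j ^ 2 - E i j) / 2 + E i j) * ((E k j ^ 2 - E k j) / 2 + E k j)
          = (E i j ^ 2 - E i j) / 2 * ((E k j ^ 2 - E k j) / 2)
            + ((u i ^ 2 * u k + u i * u k ^ 2) / 2) * w j ^ 3 := by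
        intro j
        rw [hfac i j, hfac k j]
        ring
      rw [Finset.sum_congr rfl fun j _ => key j, Finset.sum_add_distrib, ← Finset.mul_sum,
        hsw3, mul_zero, add_zero]
    · ext j l
      simp only [Matrix.mul_apply, Matrix.add_apply, Matrix.transpose_apply, Matrix.of_apply]
      have key : ∀ i, ((E i j ^ 2 - E i j) / 2 + E i j) * ((E i l ^ 2 - E i l) / 2 + E i l)
          = (E i j ^ 2 - E i j) / 2 * ((E i l ^ 2 - E i l) / 2)
            + ((w j ^ 2 * w l + w j * w l ^ 2) / 2) * u i ^ 3 := by
        intro i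
        rw [hfac i j, hfac i l]
        ring
      rw [Finset.sum_congr rfl fun i _ => key i, Finset.sum_add_distrib, ← Finset.mul_sum,
        hsu3, mul_zero, add_zero]
  · -- uniqueness part
    intro A _ _ hG _
    set s : ℝ := ∑ j, w j ^ 2 with hs_def
    set W : Fin m → ℝ := fun i => ∑ j, A i j * w j with hW_def
    have star : ∀ i k, u k * W i + u i * W k + u i * u k * s = 0 := by
      intro i k
      have h := congrFun (congrFun hG i) k
      simp only [Matrix.mul_apply, Matrix.add_apply, Matrix.transpose_apply] at h
      have key : ∀ j, (A i j + E i j) * (A k j + E k j)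
          = A i j * A k j + (u k * (A i j * w j) + u i * (A k j * w j)
            + (u i * u k) * w j ^ 2) := by
        intro j
        rw [hfac i j, hfac k j]
        ring
      rw [Finset.sum_congr rfl fun j _ => key j, Finset.sum_add_distrib] at h
      have h2 : ∑ j, (u k * (A i j * w j) + u i * (A k j * w j) + (u i * u k) * w j ^ 2) = 0 := by
        linarith [h]
      rw [Finset.sum_add_distrib, Finset.sum_add_distrib, ← Finset.mul_sum, ← Finset.mul_sum,
        ← Finset.mul_sum] at h2
      rw [hW_def, hs_def]
      linarith [h2]
    -- W is proportional to u
    have hWprop : ∀ i, W i = u i * (-(e * W i0) - s) := by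
      intro i
      have h := star i i0
      have hui0 : u i0 = e := rfl
      rw [hui0] at h
      have : e * (e * W i) = e * (-(u i * W i0) - u i * e * s) := by
        rw [show e * W i = -(u i * W i0) - u i * e * s by linarith]
      calc W i = (e * e) * W i := by rw [he2, one_mul]
        _ = e * (e * W i) := by ring
        _ = e * (-(u i * W i0) - u i * e * s) := this
        _ = u i * (-(e * W i0) - (e * e) * s) := by ring
        _ = u i * (-(e * W i0) - s) := by rw [he2, one_mul]
    ext i k
    simp only [Matrix.mul_apply, Matrix.add_apply, Matrix.smul_apply, Matrix.transpose_apply,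
      Matrix.zero_apply, smul_eq_mul]
    have key : ∀ j, ((2:ℝ) * A i j + E i j) * E k j
        = 2 * (u k * (A i j * w j)) + (u i * u k) * w j ^ 2 := by
      intro j
      rw [hfac i j, hfac k j]
      ring
    rw [Finset.sum_congr rfl fun j _ => key j, Finset.sum_add_distrib, ← Finset.mul_sum,
      ← Finset.mul_sum, ← Finset.mul_sum]
    have hstar := star i k
    have hsym : u k * W i = u i * W k := by
      rw [hWprop i, hWprop k]; ring
    rw [hW_def] at hsym hstar
    rw [hs_def] at hstar
    linarith [hstar, hsym]
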